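/- Let f be a real-valued closed convex function with compact convex effective domain D ⊆ ℝ^n. Then the perspective function F(x,t) (defined as t·f(x/t) for t > 0 with x/t ∈ D, as 0 for t = 0 and x = 0, and +∞ otherwise) is itself a closed (lower semicontinuous) convex function on ℝ^n × ℝ. -/

import Mathlib

open scoped Classical

/-- The perspective function of a closed convex function `f` with effective
domain `D`: `F(x,t) = t·f(x/t)` if `t > 0` and `x/t ∈ D`; `F(x,t) = 0` if
`t = 0` and `x = 0`; and `F(x,t) = +∞` otherwise. -/
noncomputable def persp {n : ℕ} (D : Set (Fin n → ℝ)) (f : (Fin n → ℝ) → ℝ)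
    (x : Fin n → ℝ) (t : ℝ) : EReal :=
  if 0 < t ∧ t⁻¹ • x ∈ D then ((t * f (t⁻¹ • x) : ℝ) : EReal)
  else if t = 0 ∧ x = 0 then (0 : EReal) else ⊤

lemma persp_eq_top {n : ℕ} {D : Set (Fin n → ℝ)} {f : (Fin n → ℝ) → ℝ}
    {x : Fin n → ℝ} {t : ℝ} (h1 : ¬(0 < t ∧ t⁻¹ • x ∈ D)) (h2 : ¬(t = 0 ∧ x = 0)) :
    persp D f x t = ⊤ := by
  simp [persp, h1, h2]

lemma persp_le_iff {n : ℕ} (D : Set (Fin n → ℝ)) (f : (Fin n → ℝ) → ℝ)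
    (x : Fin n → ℝ) (t r : ℝ) :
    persp D f x t ≤ (r : EReal) ↔
      (0 < t ∧ t⁻¹ • x ∈ D ∧ t * f (t⁻¹ • x) ≤ r) ∨ (t = 0 ∧ x = 0 ∧ 0 ≤ r) := by
  unfold persp
  split_ifs with h1 h2
  · rw [EReal.coe_le_coe_iff]
    constructor
    · exact fun h => Or.inl ⟨h1.1, h1.2, h⟩
    · rintro (⟨_, _, h⟩ | ⟨h, _, _⟩)
      · exact h
      · exact absurd h h1.1.ne'
  · constructor
    · intro h
      refine Or.inr ⟨h2.1, h2.2, ?_⟩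
      exact_mod_cast h
    · rintro (h | ⟨_, _, h⟩)
      · exact absurd ⟨h.1, h.2.1⟩ h1
      · exact_mod_cast h
  · simp only [top_le_iff]
    constructor
    · intro h; exact absurd h (EReal.coe_ne_top r)
    · rintro (h | h)
      · exact absurd ⟨h.1, h.2.1⟩ h1
      · exact absurd ⟨h.1, h.2.1⟩ h2

/-- The perspective of a closed convex function with compact convex effective
domain is itself closed (lower semicontinuous) and convex, the latter expressed
via convexity of its epigraph. -/
theorem stmt_4 {n : ℕ} (D : Set (Fin n → ℝ)) (f : (Fin n → ℝ) → ℝ)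
    (hDne : D.Nonempty) (hDc : IsCompact D) (hDconv : Convex ℝ D)
    (hf : ConvexOn ℝ D f) (hfc : ContinuousOn f D) :
    LowerSemicontinuous (fun p : (Fin n → ℝ) × ℝ => persp D f p.1 p.2) ∧
      Convex ℝ {q : ((Fin n → ℝ) × ℝ) × ℝ | persp D f q.1.1 q.1.2 ≤ (q.2 : EReal)} := by
  constructor
  · -- Lower semicontinuity
    obtain ⟨M, hM0, hM⟩ : ∃ M : ℝ, 0 < M ∧ ∀ z ∈ D, ‖z‖ ≤ M := by
      obtain ⟨C, hC⟩ := isBounded_iff_forall_norm_le.mp hDc.isBounded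
      exact ⟨max C 1, lt_of_lt_of_le one_pos (le_max_right _ _),
        fun z hz => (hC z hz).trans (le_max_left _ _)⟩
    obtain ⟨B, hB0, hB⟩ : ∃ B : ℝ, 0 ≤ B ∧ ∀ z ∈ D, |f z| ≤ B := by
      obtain ⟨C, hC⟩ := hDc.exists_bound_of_continuousOn hfc
      exact ⟨max C 0, le_max_right _ _,
        fun z hz => le_trans (by simpa using hC z hz) (le_max_left _ _)⟩
    intro p y hy
    replace hy : y < persp D f p.1 p.2 := hy
    rcases lt_trichotomy p.2 0 with ht | ht | ht
    · -- t < 0 : function is ⊤ nearby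
      have hev : ∀ᶠ p' : (Fin n → ℝ) × ℝ in nhds p, p'.2 < 0 :=
        (isOpen_lt continuous_snd continuous_const).eventually_mem ht
      filter_upwards [hev] with p' hp'
      show y < persp D f p'.1 p'.2
      have : persp D f p'.1 p'.2 = ⊤ :=
        persp_eq_top (fun h => absurd h.1 (not_lt.mpr hp'.le)) (fun h => absurd h.1 hp'.ne)
      rw [this]
      calc y < persp D f p.1 p.2 := hy
        _ ≤ ⊤ := le_top
    · -- t = 0
      by_cases hx : p.1 = 0
      · -- value is 0
        have hval : persp D f p.1 p.2 = 0 := by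
          rw [persp, if_neg (fun h => lt_irrefl _ (ht ▸ h.1)), if_pos ⟨ht, hx⟩]
        rw [hval] at hy
        obtain ⟨c, hyc, hc0⟩ := EReal.exists_between_coe_real hy
        have hc0' : c < 0 := by exact_mod_cast hc0
        set δ : ℝ := -c / (B + 1) with hδ
        have hδ0 : 0 < δ := div_pos (neg_pos.mpr hc0') (by linarith)
        have hev : ∀ᶠ p' : (Fin n → ℝ) × ℝ in nhds p, |p'.2| < δ := by
          have : ContinuousAt (fun p' : (Fin n → ℝ) × ℝ => |p'.2|) p :=
            continuousAt_snd.abs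
          have h0 : |p.2| < δ := by rw [ht]; simpa using hδ0
          exact this.eventually_mem (Iio_mem_nhds h0)
        filter_upwards [hev] with p' hp'
        show y < persp D f p'.1 p'.2
        refine lt_of_lt_of_le hyc ?_
        rw [persp]
        split_ifs with h1 h2
        · rw [EReal.coe_le_coe_iff]
          have hfz := hB _ h1.2
          have ht' : p'.2 < δ := lt_of_le_of_lt (le_abs_self _) hp'
          have h1' : -B ≤ f (p'.2⁻¹ • p'.1) := neg_le_of_abs_le hfz
          have : -(δ * B) ≤ p'.2 * f (p'.2⁻¹ • p'.1) := by nlinarith [h1.1]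
          have hcδ : c = -(δ * (B + 1)) := by
            rw [hδ]; field_simp
          nlinarith
        · exact_mod_cast hc0'.le
        · exact le_top
      · -- t = 0, x ≠ 0 : function is ⊤ nearby
        have hxn : 0 < ‖p.1‖ := norm_pos_iff.mpr hx
        set δ : ℝ := ‖p.1‖ / (2 * M) with hδ
        have hδ0 : 0 < δ := div_pos hxn (by linarith)
        have hev1 : ∀ᶠ p' : (Fin n → ℝ) × ℝ in nhds p, ‖p.1‖ / 2 < ‖p'.1‖ :=
          (continuous_fst.norm.continuousAt).eventually_mem (Ioi_mem_nhds (by linarith))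
        have hev2 : ∀ᶠ p' : (Fin n → ℝ) × ℝ in nhds p, |p'.2| < δ := by
          have h0 : |p.2| < δ := by rw [ht]; simpa using hδ0
          exact (continuousAt_snd.abs).eventually_mem (Iio_mem_nhds h0)
        filter_upwards [hev1, hev2] with p' hp1 hp2
        show y < persp D f p'.1 p'.2
        have htop : persp D f p'.1 p'.2 = ⊤ := by
          refine persp_eq_top ?_ ?_
          · rintro ⟨htp, hzD⟩
            have hnz := hM _ hzD
            rw [norm_smul] at hnz
            have : ‖p'.2⁻¹‖ = p'.2⁻¹ := by
              rw [Real.norm_eq_abs, abs_of_pos (inv_pos.mpr htp)]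
            rw [this] at hnz
            have ht2 : p'.2 < δ := lt_of_le_of_lt (le_abs_self _) hp2
            have h1 : ‖p.1‖ / 2 < p'.2 * M := by
              calc ‖p.1‖ / 2 < ‖p'.1‖ := hp1
                _ = p'.2 * (p'.2⁻¹ * ‖p'.1‖) := by field_simp
                _ ≤ p'.2 * M := by
                    exact mul_le_mul_of_nonneg_left hnz htp.le
            have h2 : p'.2 * M < δ * M := by
              exact mul_lt_mul_of_pos_right ht2 hM0
            rw [hδ] at h2
            have : ‖p.1‖ / (2 * M) * M = ‖p.1‖ / 2 := by field_simp
            rw [this] at h2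
            linarith
          · rintro ⟨-, hx0⟩
            rw [hx0] at hp1
            simp at hp1
            linarith
        rw [htop]
        have : y < ⊤ := by
          calc y < persp D f p.1 p.2 := hy
            _ ≤ ⊤ := le_top
        have hyt : persp D f p.1 p.2 = ⊤ :=
          persp_eq_top (fun h => lt_irrefl _ (ht ▸ h.1)) (fun h => hx h.2)
        rw [hyt] at hy
        exact hy
    · -- t > 0
      set φ : (Fin n → ℝ) × ℝ → (Fin n → ℝ) := fun p' => p'.2⁻¹ • p'.1 with hφ
      have hφc : ContinuousAt φ p := (continuousAt_snd.inv₀ ht.ne').smul continuousAt_fst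
      by_cases hz : φ p ∈ D
      · -- value is t * f (t⁻¹ • x)
        have hval : persp D f p.1 p.2 = ((p.2 * f (φ p) : ℝ) : EReal) := by
          rw [persp, if_pos ⟨ht, hz⟩]
        rw [hval] at hy
        obtain ⟨c, hyc, hcv⟩ := EReal.exists_between_coe_real hy
        have hcv' : c < p.2 * f (φ p) := by exact_mod_cast hcv
        set S : Set ((Fin n → ℝ) × ℝ) := φ ⁻¹' D with hS
        have hh : ContinuousWithinAt (fun p' => p'.2 * f (φ p')) S p := by
          refine (continuousAt_snd.continuousWithinAt).mul ?_
          exact (hfc _ hz).comp hφc.continuousWithinAt (fun p' hp' => hp')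
        have hev : ∀ᶠ p' in nhdsWithin p S, c < p'.2 * f (φ p') :=
          hh.eventually_mem (Ioi_mem_nhds hcv')
        rw [eventually_nhdsWithin_iff] at hev
        have hpos : ∀ᶠ p' : (Fin n → ℝ) × ℝ in nhds p, 0 < p'.2 :=
          (isOpen_lt continuous_const continuous_snd).eventually_mem ht
        filter_upwards [hev, hpos] with p' h1 h2
        show y < persp D f p'.1 p'.2
        by_cases hd : φ p' ∈ D
        · have := h1 hd
          rw [persp, if_pos ⟨h2, hd⟩]
          calc y < (c : EReal) := hyc
            _ < _ := by exact_mod_cast this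
        · rw [persp_eq_top (fun h => hd h.2) (fun h => absurd h.1 h2.ne')]
          calc y < (c : EReal) := hyc
            _ ≤ ⊤ := le_top
      · -- t > 0, x/t ∉ D : function is ⊤ nearby
        have hev : ∀ᶠ p' : (Fin n → ℝ) × ℝ in nhds p, φ p' ∈ Dᶜ :=
          hφc.eventually_mem (hDc.isClosed.isOpen_compl.mem_nhds hz)
        have hpos : ∀ᶠ p' : (Fin n → ℝ) × ℝ in nhds p, 0 < p'.2 :=
          (isOpen_lt continuous_const continuous_snd).eventually_mem ht
        filter_upwards [hev, hpos] with p' h1 h2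
        show y < persp D f p'.1 p'.2
        rw [persp_eq_top (fun h => h1 h.2) (fun h => absurd h.1 h2.ne')]
        calc y < persp D f p.1 p.2 := hy
          _ ≤ ⊤ := le_top
  · -- Convexity of the epigraph
    rintro ⟨⟨x₁, t₁⟩, r₁⟩ hq₁ ⟨⟨x₂, t₂⟩, r₂⟩ hq₂ a b ha hb hab
    simp only [Set.mem_setOf_eq, persp_le_iff] at hq₁ hq₂ ⊢
    simp only [Prod.smul_mk, Prod.mk_add_mk, smul_eq_mul]
    rcases eq_or_lt_of_le ha with ha0 | ha0
    · rw [← ha0] at hab ⊢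
      simp only [zero_smul, zero_add, zero_mul] at hab ⊢
      rw [hab] at *
      simpa using hq₂
    rcases eq_or_lt_of_le hb with hb0 | hb0
    · rw [← hb0] at hab ⊢
      simp only [zero_smul, add_zero, zero_mul] at hab ⊢
      rw [hab] at *
      simpa using hq₁
    rcases hq₁ with ⟨ht₁, hz₁, hr₁⟩ | ⟨ht₁, hx₁, hr₁⟩ <;>
      rcases hq₂ with ⟨ht₂, hz₂, hr₂⟩ | ⟨ht₂, hx₂, hr₂⟩
    · -- both in the "positive" part
      set t : ℝ := a * t₁ + b * t₂ with hts
      have htpos : 0 < t := by positivity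
      set μ : ℝ := a * t₁ / t with hμ
      set ν : ℝ := b * t₂ / t with hν
      have hμ0 : 0 ≤ μ := by positivity
      have hν0 : 0 ≤ ν := by positivity
      have hμν : μ + ν = 1 := by
        rw [hμ, hν]; field_simp; exact hts.symm
      have hzeq : t⁻¹ • (a • x₁ + b • x₂) = μ • (t₁⁻¹ • x₁) + ν • (t₂⁻¹ • x₂) := by
        have h1 : t⁻¹ * a = μ * t₁⁻¹ := by rw [hμ]; field_simp
        have h2 : t⁻¹ * b = ν * t₂⁻¹ := by rw [hν]; field_simp
        rw [smul_add, smul_smul, smul_smul, smul_smul, smul_smul, h1, h2]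
      refine Or.inl ⟨htpos, ?_, ?_⟩
      · rw [hzeq]
        exact hDconv hz₁ hz₂ hμ0 hν0 hμν
      · rw [hzeq]
        have hj := hf.2 hz₁ hz₂ hμ0 hν0 hμν
        simp only [smul_eq_mul] at hj
        have h1 : t * f (μ • (t₁⁻¹ • x₁) + ν • (t₂⁻¹ • x₂)) ≤
            t * (μ * f (t₁⁻¹ • x₁) + ν * f (t₂⁻¹ • x₂)) :=
          mul_le_mul_of_nonneg_left hj htpos.le
        have h2 : t * (μ * f (t₁⁻¹ • x₁) + ν * f (t₂⁻¹ • x₂)) =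
            a * t₁ * f (t₁⁻¹ • x₁) + b * t₂ * f (t₂⁻¹ • x₂) := by
          rw [hμ, hν]; field_simp
        have h3 : a * (t₁ * f (t₁⁻¹ • x₁)) ≤ a * r₁ :=
          mul_le_mul_of_nonneg_left hr₁ ha0.le
        have h4 : b * (t₂ * f (t₂⁻¹ • x₂)) ≤ b * r₂ :=
          mul_le_mul_of_nonneg_left hr₂ hb0.le
        nlinarith
    · -- first positive, second corner
      rw [ht₂, hx₂]
      have htpos : 0 < a * t₁ + b * 0 := by simpa using mul_pos ha0 ht₁
      have hzeq : (a * t₁ + b * 0)⁻¹ • (a • x₁ + b • (0 : Fin n → ℝ)) = t₁⁻¹ • x₁ := by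
        have hc : (a * t₁ + b * 0)⁻¹ * a = t₁⁻¹ := by
          rw [mul_zero, add_zero, mul_inv, mul_comm a⁻¹, mul_assoc,
            inv_mul_cancel₀ ha0.ne', mul_one]
        rw [smul_zero, add_zero, smul_smul, hc]
      refine Or.inl ⟨htpos, ?_, ?_⟩
      · rw [hzeq]; exact hz₁
      · rw [hzeq]
        have h3 : a * (t₁ * f (t₁⁻¹ • x₁)) ≤ a * r₁ :=
          mul_le_mul_of_nonneg_left hr₁ ha0.le
        have h4 : 0 ≤ b * r₂ := mul_nonneg hb0.le hr₂
        nlinarith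
    · -- first corner, second positive
      rw [ht₁, hx₁]
      have htpos : 0 < a * 0 + b * t₂ := by simpa using mul_pos hb0 ht₂
      have hzeq : (a * 0 + b * t₂)⁻¹ • (a • (0 : Fin n → ℝ) + b • x₂) = t₂⁻¹ • x₂ := by
        have hc : (a * 0 + b * t₂)⁻¹ * b = t₂⁻¹ := by
          rw [mul_zero, zero_add, mul_inv, mul_comm b⁻¹, mul_assoc,
            inv_mul_cancel₀ hb0.ne', mul_one]
        rw [smul_zero, zero_add, smul_smul, hc]
      refine Or.inl ⟨htpos, ?_, ?_⟩
      · rw [hzeq]; exact hz₂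
      · rw [hzeq]
        have h3 : b * (t₂ * f (t₂⁻¹ • x₂)) ≤ b * r₂ :=
          mul_le_mul_of_nonneg_left hr₂ hb0.le
        have h4 : 0 ≤ a * r₁ := mul_nonneg ha0.le hr₁
        nlinarith
    · -- both corner
      refine Or.inr ⟨?_, ?_, ?_⟩
      · rw [ht₁, ht₂]; ring
      · rw [hx₁, hx₂]; simp
      · have := mul_nonneg ha0.le hr₁
        have := mul_nonneg hb0.le hr₂
        linarith
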